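/- arXiv:1608.05541 — 2 statements merged into one kernel-verified Lean document; each statement's English description precedes it below -/
import Mathlib

section
/- Let n ≥ 1 and let ψ : ℂ^n → ℝ be any function. Then ψ̂ = ψ (i.e., ψ̂(w) = ψ(w) ∈ ℝ for all w ∈ ℂ^n) if and only if ψ(z) = ‖z‖² for all z ∈ ℂ^n. -/
open scoped ComplexConjugate

noncomputable section

/-- The real pairing 2·Re(Σ_j z_j·conj(w_j)) on ℂⁿ. -/
def cpair {n : ℕ} (z w : EuclideanSpace ℂ (Fin n)) : ℝ :=
  2 * (∑ j, z j * conj (w j)).re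

/-- The complex Legendre transform ψ̂(w) = sup_z [2·Re(Σ z_j conj(w_j)) − ψ(z)] ∈ ℝ ∪ {+∞}. -/
def cLeg {n : ℕ} (ψ : EuclideanSpace ℂ (Fin n) → ℝ) (w : EuclideanSpace ℂ (Fin n)) : EReal :=
  ⨆ z : EuclideanSpace ℂ (Fin n), ((cpair z w - ψ z : ℝ) : EReal)

lemma cpair_eq {n : ℕ} (z w : EuclideanSpace ℂ (Fin n)) :
    cpair z w = 2 * (inner ℂ w z : ℂ).re := by
  unfold cpair
  congr 2

lemma cpair_sub_sq {n : ℕ} (z w : EuclideanSpace ℂ (Fin n)) :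
    cpair z w - ‖z‖^2 = ‖w‖^2 - ‖z - w‖^2 := by
  have h := @norm_sub_sq ℂ _ _ _ _ z w
  simp only [RCLike.re_to_complex] at h
  have h2 : (inner ℂ z w : ℂ).re = (inner ℂ w z : ℂ).re := by
    have := @inner_re_symm ℂ _ _ _ _ z w; simpa using this
  rw [cpair_eq]
  linarith

lemma cpair_self {n : ℕ} (w : EuclideanSpace ℂ (Fin n)) :
    cpair w w = 2 * ‖w‖^2 := by
  rw [cpair_eq]
  have := @inner_self_eq_norm_sq ℂ _ _ _ _ w
  simp only [RCLike.re_to_complex] at this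
  rw [this]

/-- For ψ : ℂⁿ → ℝ (n ≥ 1), ψ̂ = ψ (real-valued) iff ψ(z) = ‖z‖² for all z. -/
theorem complex_legendre_selfdual_iff (n : ℕ) (hn : 1 ≤ n)
    (ψ : EuclideanSpace ℂ (Fin n) → ℝ) :
    (∀ w : EuclideanSpace ℂ (Fin n), cLeg ψ w = (ψ w : EReal))
      ↔ (∀ z : EuclideanSpace ℂ (Fin n), ψ z = ‖z‖ ^ 2) := by
  constructor
  · intro h
    have hlow : ∀ z : EuclideanSpace ℂ (Fin n), ‖z‖ ^ 2 ≤ ψ z := by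
      intro z
      have h1 : ((cpair z z - ψ z : ℝ) : EReal) ≤ cLeg ψ z :=
        le_iSup (fun u => ((cpair u z - ψ u : ℝ) : EReal)) z
      rw [h z] at h1
      have h2 : (cpair z z - ψ z : ℝ) ≤ ψ z := EReal.coe_le_coe_iff.mp h1
      have h3 := cpair_self z
      linarith
    intro z
    have hup : cLeg ψ z ≤ ((‖z‖ ^ 2 : ℝ) : EReal) := by
      apply iSup_le
      intro u
      apply EReal.coe_le_coe_iff.mpr
      have h4 := cpair_sub_sq u z
      have h5 := hlow u
      have h6 : (0:ℝ) ≤ ‖u - z‖ ^ 2 := by positivity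
      linarith
    rw [h z] at hup
    have := EReal.coe_le_coe_iff.mp hup
    linarith [hlow z]
  · intro h w
    apply le_antisymm
    · apply iSup_le
      intro u
      apply EReal.coe_le_coe_iff.mpr
      rw [h u, h w]
      have h4 := cpair_sub_sq u w
      have h6 : (0:ℝ) ≤ ‖u - w‖ ^ 2 := by positivity
      linarith
    · have h1 : ((cpair w w - ψ w : ℝ) : EReal) ≤ cLeg ψ w :=
        le_iSup (fun u => ((cpair u w - ψ u : ℝ) : EReal)) w
      have h2 : cpair w w - ψ w = ψ w := by
        rw [h w]; have := cpair_self w; linarith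
      rwa [h2] at h1
end
end

section
/- Let n ≥ 1, let Ω ⊆ ℂ^n be open, and let φ : Ω → ℝ be real-analytic (as a function of the 2n real variables). Then there exist an open set W with Δ_Ω ⊆ W ⊆ Ω × Ω and a polarization F of φ on W. -/
open scoped ComplexConjugate

noncomputable section

open Complex Function Filter Set
open scoped NNReal ENNReal

namespace Polar

variable {E : Type*} [NormedAddCommGroup E] [NormedSpace ℂ E]

/-- Twisted multiplication by `i` on `E × E`. -/
def Istar (v : E × E) : E × E := (Complex.I • v.1, -(Complex.I • v.2))

/-- A continuous real-multilinear map on `E × E` is *twisted-linear* if multiplying one slot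
by the twisted `i` multiplies the value by `i`. -/
def Twisted {k : ℕ} (M : ContinuousMultilinearMap ℝ (fun _ : Fin k => E × E) ℂ) : Prop :=
  ∀ (v : Fin k → E × E) (j : Fin k) (x : E × E),
    M (Function.update v j (Istar x)) = Complex.I * M (Function.update v j x)

lemma Twisted.zero {k : ℕ} : Twisted (0 : ContinuousMultilinearMap ℝ (fun _ : Fin k => E × E) ℂ) := by
  intro v j x; simp

lemma Twisted.sub {k : ℕ} {M N : ContinuousMultilinearMap ℝ (fun _ : Fin k => E × E) ℂ}
    (hM : Twisted M) (hN : Twisted N) : Twisted (M - N) := by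
  intro v j x
  simp [hM v j x, hN v j x, mul_sub]

/-- "real part" projection for the twisted complexification. -/
def Amap : (E × E) →L[ℝ] E :=
  (2⁻¹ : ℝ) • ((ContinuousLinearMap.fst ℝ E E) + (ContinuousLinearMap.snd ℝ E E))

/-- "imaginary part" projection for the twisted complexification. -/
def Bmap : (E × E) →L[ℝ] E :=
  (-(Complex.I) / 2 : ℂ) • ((ContinuousLinearMap.fst ℝ E E) - (ContinuousLinearMap.snd ℝ E E))

@[simp] lemma Amap_apply (v : E × E) : Amap v = (2⁻¹ : ℝ) • (v.1 + v.2) := rfl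
@[simp] lemma Bmap_apply (v : E × E) : Bmap v = (-(Complex.I) / 2 : ℂ) • (v.1 - v.2) := rfl

lemma Amap_diag (x : E) : Amap (x, x) = x := by
  simp only [Amap_apply]
  module

lemma Bmap_diag (x : E) : Bmap (x, x) = 0 := by
  simp [Bmap_apply]

lemma Amap_Istar (v : E × E) : Amap (Istar v) = -(Bmap v) := by
  simp only [Istar, Amap_apply, Bmap_apply]
  match_scalars <;> ring_nf <;> rw [Complex.I_sq] <;> ring

lemma Bmap_Istar (v : E × E) : Bmap (Istar v) = Amap v := by
  simp only [Istar, Amap_apply, Bmap_apply]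
  match_scalars <;> ring_nf <;> rw [Complex.I_sq] <;> ring

/-- coefficient of a term in the twisted complexification -/
def coefI {k : ℕ} (f : Fin k → Bool) : ℂ := ∏ j, (if f j then Complex.I else 1)

/-- The twisted complexification of a continuous real multilinear map `E^k → ℝ`. -/
def cxm {k : ℕ} (p : ContinuousMultilinearMap ℝ (fun _ : Fin k => E) ℝ) :
    ContinuousMultilinearMap ℝ (fun _ : Fin k => E × E) ℂ :=
  ∑ f : Fin k → Bool, coefI f •
    ((Complex.ofRealCLM.compContinuousMultilinearMap p).compContinuousLinearMap
      (fun j => if f j then Bmap else Amap))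

lemma cxm_apply {k : ℕ} (p : ContinuousMultilinearMap ℝ (fun _ : Fin k => E) ℝ)
    (v : Fin k → E × E) :
    cxm p v = ∑ f : Fin k → Bool, coefI f *
      ((p (fun j => (if f j then Bmap else Amap) (v j)) : ℝ) : ℂ) := by
  simp [cxm, smul_eq_mul]

lemma cxm_diag {k : ℕ} (p : ContinuousMultilinearMap ℝ (fun _ : Fin k => E) ℝ)
    (m : Fin k → E) : cxm p (fun j => (m j, m j)) = ((p m : ℝ) : ℂ) := by
  rw [cxm_apply]
  rw [Finset.sum_eq_single (fun _ => false)]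
  · have : ∀ j, Amap ((m j, m j) : E × E) = m j := fun j => Amap_diag (m j)
    simp only [coefI, if_neg Bool.false_ne_true]
    simp [this]
  · intro f _ hf
    have : ∃ j, f j = true := by
      by_contra h
      push_neg at h
      exact hf (funext fun j => by simpa using h j)
    obtain ⟨j, hj⟩ := this
    have hz : (fun j => (if f j then Bmap else Amap) ((m j, m j) : E × E)) j = 0 := by
      simp [hj, Bmap]
    rw [p.map_coord_zero j hz]
    simp
  · intro h
    exact absurd (Finset.mem_univ _) h
lemma coefI_true_eq {k : ℕ} (g : Fin k → Bool) (j : Fin k) :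
    coefI (Function.update g j true) = Complex.I * coefI (Function.update g j false) := by
  unfold coefI
  have h1 : ∀ (b : Bool), (fun l => if (Function.update g j b l) then Complex.I else 1)
      = Function.update (fun l => if g l then Complex.I else 1) j (if b then Complex.I else 1) := by
    intro b; funext l; by_cases hl : l = j
    · subst hl; simp
    · simp [Function.update_of_ne hl]
  rw [show (fun l => if (Function.update g j true l) then Complex.I else 1)
      = Function.update (fun l => if g l then Complex.I else 1) j Complex.I from h1 true]
  rw [show (fun l => if (Function.update g j false l) then Complex.I else 1)
      = Function.update (fun l => if g l then Complex.I else 1) j 1 from h1 false]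
  rw [Finset.prod_update_of_mem (Finset.mem_univ j), Finset.prod_update_of_mem (Finset.mem_univ j)]
  ring

lemma cxm_twisted {k : ℕ} (p : ContinuousMultilinearMap ℝ (fun _ : Fin k => E) ℝ) :
    Twisted (cxm p) := by
  intro v j x
  have hinv : Function.Involutive (fun f : Fin k → Bool => Function.update f j (! f j)) := by
    intro f; funext l; by_cases hl : l = j
    · subst hl; simp
    · simp [Function.update_of_ne hl]
  rw [cxm_apply, cxm_apply, Finset.mul_sum]
  refine Fintype.sum_equiv (Function.Involutive.toPerm _ hinv) _ _ ?_
  intro f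
  have he : (Function.Involutive.toPerm _ hinv) f = Function.update f j (! f j) := rfl
  set f' : Fin k → Bool := Function.update f j (! f j) with hf'def
  rw [he]
  set base : Fin k → E := fun l => (if f l then Bmap else Amap) (v l) with hbase
  have hargs : ∀ (g : Fin k → Bool) (c : E × E), (∀ l, l ≠ j → g l = f l) →
      (fun l => (if g l then Bmap else Amap) (Function.update v j c l))
        = Function.update base j ((if g j then Bmap else Amap) c) := by
    intro g c hg; funext l; by_cases hl : l = j
    · subst hl; simp
    · rw [Function.update_of_ne hl, Function.update_of_ne hl, hbase]
      simp [hg l hl]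
  have hf'off : ∀ l, l ≠ j → f' l = f l := by
    intro l hl; rw [hf'def, Function.update_of_ne hl]
  have hfoff : ∀ l, l ≠ j → f l = f l := fun _ _ => rfl
  rw [hargs f (Istar x) hfoff, hargs f' x hf'off]
  have hf'j : f' j = ! f j := by rw [hf'def]; simp
  have hcoe : f = Function.update f j (f j) := by simp
  cases hb : f j with
  | true =>
      rw [hf'j, hb]
      simp only [Bool.not_true, Bool.false_eq_true, reduceIte]
      rw [Bmap_Istar]
      have hcoef : coefI f = Complex.I * coefI f' := by
        rw [hf'def, hb]
        simp only [Bool.not_true]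
        nth_rewrite 1 [hcoe]
        rw [hb, coefI_true_eq]
      rw [hcoef]
      ring
  | false =>
      rw [hf'j, hb]
      simp only [Bool.not_false, Bool.false_eq_true, reduceIte]
      rw [Amap_Istar]
      have hneg : Function.update base j (-(Bmap x)) = Function.update base j ((-1 : ℝ) • (Bmap x)) := by
        simp
      have hcoef : coefI f' = Complex.I * coefI f := by
        rw [hf'def, hb]
        simp only [Bool.not_false]
        nth_rewrite 2 [hcoe]
        rw [hb, coefI_true_eq]
      rw [hcoef, hneg]
      rw [show p (Function.update base j ((-1 : ℝ) • (Bmap x)))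
          = (-1 : ℝ) • p (Function.update base j (Bmap x)) from p.map_update_smul base j (-1 : ℝ) (Bmap x)]
      rw [neg_one_smul]
      push_cast
      linear_combination (-(coefI f * ((p (Function.update base j (Bmap x)) : ℝ) : ℂ))) * Complex.I_mul_I
lemma Amap_norm_le (u : E × E) : ‖Amap u‖ ≤ ‖u‖ := by
  show ‖(2⁻¹ : ℝ) • (u.1 + u.2)‖ ≤ ‖u‖
  rw [norm_smul]
  have h1 : ‖u.1 + u.2‖ ≤ ‖u.1‖ + ‖u.2‖ := norm_add_le _ _
  have h2 : ‖u.1‖ ≤ ‖u‖ := norm_fst_le u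
  have h3 : ‖u.2‖ ≤ ‖u‖ := norm_snd_le u
  have : ‖(2⁻¹:ℝ)‖ = 2⁻¹ := by norm_num
  rw [this]; nlinarith [norm_nonneg u]

lemma Bmap_norm_le (u : E × E) : ‖Bmap u‖ ≤ ‖u‖ := by
  show ‖(-(Complex.I)/2 : ℂ) • (u.1 - u.2)‖ ≤ ‖u‖
  rw [norm_smul]
  have h1 : ‖u.1 - u.2‖ ≤ ‖u.1‖ + ‖u.2‖ := norm_sub_le _ _
  have h2 : ‖u.1‖ ≤ ‖u‖ := norm_fst_le u
  have h3 : ‖u.2‖ ≤ ‖u‖ := norm_snd_le u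
  have : ‖(-(Complex.I)/2 : ℂ)‖ = 2⁻¹ := by
    simp [norm_div]
  rw [this]; nlinarith [norm_nonneg u]

lemma coefI_norm {k : ℕ} (f : Fin k → Bool) : ‖coefI f‖ = 1 := by
  unfold coefI
  rw [norm_prod]
  apply Finset.prod_eq_one
  intro j _
  by_cases h : f j <;> simp [h]

lemma cxm_norm_le {k : ℕ} (p : ContinuousMultilinearMap ℝ (fun _ : Fin k => E) ℝ) :
    ‖cxm p‖ ≤ 2 ^ k * ‖p‖ := by
  apply ContinuousMultilinearMap.opNorm_le_bound
  · positivity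
  · intro v
    rw [cxm_apply]
    calc ‖∑ f : Fin k → Bool, coefI f * ((p fun j => (if f j then Bmap else Amap) (v j) : ℝ) : ℂ)‖
        ≤ ∑ f : Fin k → Bool, ‖coefI f * ((p fun j => (if f j then Bmap else Amap) (v j) : ℝ) : ℂ)‖ :=
          norm_sum_le _ _
      _ ≤ ∑ _f : Fin k → Bool, ‖p‖ * ∏ j, ‖v j‖ := by
          apply Finset.sum_le_sum
          intro f _
          rw [norm_mul, coefI_norm, one_mul, Complex.norm_real]
          calc ‖p fun j => (if f j then Bmap else Amap) (v j)‖
              ≤ ‖p‖ * ∏ j, ‖(if f j then Bmap else Amap) (v j)‖ := p.le_opNorm _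
            _ ≤ ‖p‖ * ∏ j, ‖v j‖ := by
                apply mul_le_mul_of_nonneg_left _ (norm_nonneg p)
                apply Finset.prod_le_prod (fun j _ => norm_nonneg _)
                intro j _
                by_cases h : f j
                · simpa [h] using Bmap_norm_le (v j)
                · simpa [h] using Amap_norm_le (v j)
      _ = 2 ^ k * ‖p‖ * ∏ j, ‖v j‖ := by
          rw [Finset.sum_const, Finset.card_univ]
          simp [Fintype.card_fun]
          ring

/-- evaluation of a continuous multilinear map, as a continuous linear map -/
def evalCLM {k : ℕ} (w : Fin k → E × E) :
    ContinuousMultilinearMap ℝ (fun _ : Fin k => E × E) ℂ →L[ℝ] ℂ :=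
  LinearMap.mkContinuous
    { toFun := fun M => M w
      map_add' := fun M N => rfl
      map_smul' := fun c M => rfl }
    (∏ i, ‖w i‖) (fun M => (M.le_opNorm w).trans_eq (mul_comm _ _))

@[simp] lemma evalCLM_apply {k : ℕ} (w : Fin k → E × E)
    (M : ContinuousMultilinearMap ℝ (fun _ : Fin k => E × E) ℂ) : evalCLM w M = M w := rfl

lemma Twisted.sum {k : ℕ} {ι : Type*} (s : Finset ι)
    (g : ι → ContinuousMultilinearMap ℝ (fun _ : Fin k => E × E) ℂ)
    (h : ∀ i ∈ s, Twisted (g i)) : Twisted (∑ i ∈ s, g i) := by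
  intro v j x
  rw [ContinuousMultilinearMap.sum_apply, ContinuousMultilinearMap.sum_apply, Finset.mul_sum]
  exact Finset.sum_congr rfl (fun i hi => h i hi v j x)

lemma Twisted.tsum {k : ℕ} {g : ℕ → ContinuousMultilinearMap ℝ (fun _ : Fin k => E × E) ℂ}
    (h : ∀ l, Twisted (g l)) : Twisted (∑' l, g l) := by
  by_cases hs : Summable g
  · intro v j x
    have h1 : (∑' l, g l) (Function.update v j (Istar x))
        = ∑' l, (g l) (Function.update v j (Istar x)) :=
      ContinuousLinearMap.map_tsum (evalCLM (Function.update v j (Istar x))) hs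
    have h2 : (∑' l, g l) (Function.update v j x)
        = ∑' l, (g l) (Function.update v j x) :=
      ContinuousLinearMap.map_tsum (evalCLM (Function.update v j x)) hs
    rw [h1, h2, ← tsum_mul_left]
    exact tsum_congr fun l => h l v j x
  · rw [tsum_eq_zero_of_not_summable hs]
    exact Twisted.zero

lemma twisted_changeOriginSeriesTerm {q : FormalMultilinearSeries ℝ (E × E) ℂ}
    (hq : ∀ m, Twisted (q m)) (k l : ℕ) (s : Finset (Fin (k + l))) (hs : s.card = l)
    (y : Fin l → E × E) :
    Twisted ((q.changeOriginSeriesTerm k l s hs) y) := by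
  intro v j x
  have key : ∀ (c : E × E),
      ((q.changeOriginSeriesTerm k l s hs) y) (Function.update v j c)
        = q (k + l) (Function.update
            (fun i => Sum.elim y v ((finSumEquivOfFinset hs (by
              rw [Finset.card_compl, Fintype.card_fin, hs, add_tsub_cancel_right])).symm i))
            ((finSumEquivOfFinset hs (by
              rw [Finset.card_compl, Fintype.card_fin, hs, add_tsub_cancel_right])) (Sum.inr j)) c) := by
    intro c
    rw [FormalMultilinearSeries.changeOriginSeriesTerm]
    simp only [ContinuousMultilinearMap.curryFinFinset_apply]
    congr 1
    funext i
    set e := finSumEquivOfFinset hs (by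
      rw [Finset.card_compl, Fintype.card_fin, hs, add_tsub_cancel_right])
    by_cases hi : i = e (Sum.inr j)
    · subst hi
      rw [Function.update_self, Equiv.symm_apply_apply, Sum.elim_inr, Function.update_self]
    · rw [Function.update_of_ne hi]
      have hne : e.symm i ≠ Sum.inr j := by
        intro hcon
        exact hi (by rw [← hcon, Equiv.apply_symm_apply])
      rcases hsum : e.symm i with a | b
      · simp
      · have hbj : b ≠ j := by rintro rfl; exact hne hsum
        simp [Function.update_of_ne hbj]
  rw [key (Istar x), key x]
  exact hq (k + l) _ _ x

lemma twisted_changeOrigin {q : FormalMultilinearSeries ℝ (E × E) ℂ}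
    (hq : ∀ m, Twisted (q m)) (y : E × E) (k : ℕ) :
    Twisted (q.changeOrigin y k) := by
  have hdef : q.changeOrigin y k = ∑' l, ((q.changeOriginSeries k) l (fun _ => y)) := rfl
  rw [hdef]
  apply Twisted.tsum
  intro l
  rw [FormalMultilinearSeries.changeOriginSeries, ContinuousMultilinearMap.sum_apply]
  apply Twisted.sum
  intro s _
  exact twisted_changeOriginSeriesTerm hq k l s.1 s.2 _

lemma smul_decomp (a : ℂ) (h : E) : a • h = (a.re : ℝ) • h + (a.im : ℝ) • (Complex.I • h) := by
  rw [← Complex.coe_smul, ← Complex.coe_smul, smul_smul, ← add_smul, Complex.re_add_im]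

lemma diff_of_twisted {F : E × E → ℂ} {q : FormalMultilinearSeries ℝ (E × E) ℂ} {c : E × E}
    (hF : HasFPowerSeriesAt F q c) (h1 : Twisted (q 1)) :
    DifferentiableAt ℂ (fun z => F (z, c.2)) c.1 ∧
      DifferentiableAt ℂ (fun w => (starRingEnd ℂ) (F (c.1, w))) c.2 := by
  set D : (E × E) →L[ℝ] ℂ := continuousMultilinearCurryFin1 ℝ (E × E) ℂ (q 1) with hDdef
  have hD : HasFDerivAt F D c := hF.hasFDerivAt
  have hDI : ∀ u : E × E, D (Istar u) = Complex.I * D u := by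
    intro u
    have h := h1 (fun _ => u) 0 u
    have e1 : ∀ w : E × E, Function.update (fun _ : Fin 1 => u) 0 w = fun _ => w := by
      intro w; funext l
      have : l = 0 := Subsingleton.elim _ _
      subst this; simp
    rw [e1 (Istar u), e1 u] at h
    have happ : ∀ w : E × E, D w = (q 1) (fun _ => w) := by
      intro w; rw [hDdef]
      simp only [continuousMultilinearCurryFin1_apply]
      congr 1
    rw [happ, happ, h]
  constructor
  · -- z ↦ F (z, c.2)
    have hG : HasFDerivAt (fun z : E => (z, c.2)) (ContinuousLinearMap.inl ℝ E E) c.1 :=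
      hasFDerivAt_prodMk_left c.1 c.2
    have hcomp : HasFDerivAt (fun z : E => F (z, c.2)) (D.comp (ContinuousLinearMap.inl ℝ E E)) c.1 := by
      have := HasFDerivAt.comp (x := c.1) (by rw [show (c.1, c.2) = c from rfl]; exact hD) hG
      exact this
    have hIkey : ∀ h : E, D (Complex.I • h, 0) = Complex.I * D (h, 0) := by
      intro h
      have : Istar ((h, (0 : E)) : E × E) = ((Complex.I • h, 0) : E × E) := by
        simp [Istar]
      rw [← this, hDI]
    set D1 : E →L[ℂ] ℂ :=
      { toFun := fun h => D (h, (0 : E))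
        map_add' := by
          intro h h'
          show D (h + h', (0 : E)) = D (h, (0:E)) + D (h', (0:E))
          have : ((h + h', (0 : E)) : E × E) = (h, (0:E)) + (h', (0:E)) := by simp
          rw [this, map_add]
        map_smul' := by
          intro a h
          simp only [RingHom.id_apply]
          show D (a • h, (0 : E)) = a • D (h, (0:E))
          rw [smul_decomp a h]
          have : ((a.re : ℝ) • h + (a.im : ℝ) • (Complex.I • h), (0 : E))
              = (a.re : ℝ) • ((h, (0:E)) : E × E) + (a.im : ℝ) • ((Complex.I • h, (0:E)) : E × E) := by
            simp [Prod.smul_mk, Prod.mk_add_mk]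
          rw [this, map_add, map_smul, map_smul, hIkey,
            Complex.real_smul, Complex.real_smul, smul_eq_mul]
          linear_combination (D ((h, (0:E)) : E × E)) * (Complex.re_add_im a)
        cont := by
          exact D.continuous.comp (Continuous.prodMk_left (0 : E)) } with hD1def
    have hrs : D1.restrictScalars ℝ = D.comp (ContinuousLinearMap.inl ℝ E E) := by
      ext h; rfl
    exact (hasFDerivAt_of_restrictScalars ℝ hcomp hrs).differentiableAt
  · -- w ↦ conj (F (c.1, w))
    have hG : HasFDerivAt (fun w : E => (c.1, w)) (ContinuousLinearMap.inr ℝ E E) c.2 :=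
      hasFDerivAt_prodMk_right c.1 c.2
    have hcomp0 : HasFDerivAt (fun w : E => F (c.1, w)) (D.comp (ContinuousLinearMap.inr ℝ E E)) c.2 := by
      exact HasFDerivAt.comp (x := c.2) (by rw [show (c.1, c.2) = c from rfl]; exact hD) hG
    have hconj : HasFDerivAt (fun w : E => (starRingEnd ℂ) (F (c.1, w)))
        ((Complex.conjCLE.toContinuousLinearMap).comp (D.comp (ContinuousLinearMap.inr ℝ E E))) c.2 := by
      exact (Complex.conjCLE.toContinuousLinearMap.hasFDerivAt).comp c.2 hcomp0
    have hIkey : ∀ h : E, D (0, Complex.I • h) = -(Complex.I * D (0, h)) := by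
      intro h
      have h1 : Istar ((0, -h) : E × E) = ((0, Complex.I • h) : E × E) := by
        simp [Istar]
      have h2 : ((0, -h) : E × E) = (-1 : ℝ) • ((0, h) : E × E) := by simp
      rw [← h1, hDI, h2, map_smul]
      simp
    set D2 : E →L[ℂ] ℂ :=
      { toFun := fun h => (starRingEnd ℂ) (D (0, h))
        map_add' := by
          intro h h'
          show (starRingEnd ℂ) (D ((0:E), h + h')) = (starRingEnd ℂ) (D ((0:E), h)) + (starRingEnd ℂ) (D ((0:E), h'))
          have : (((0:E), h + h') : E × E) = ((0:E), h) + ((0:E), h') := by simp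
          rw [this, map_add, map_add]
        map_smul' := by
          intro a h
          simp only [RingHom.id_apply]
          show (starRingEnd ℂ) (D ((0:E), a • h)) = a • (starRingEnd ℂ) (D ((0:E), h))
          rw [smul_decomp a h]
          have : (((0:E), (a.re : ℝ) • h + (a.im : ℝ) • (Complex.I • h)) : E × E)
              = (a.re : ℝ) • (((0:E), h) : E × E) + (a.im : ℝ) • (((0:E), Complex.I • h) : E × E) := by
            simp [Prod.smul_mk, Prod.mk_add_mk]
          rw [this, map_add, map_smul, map_smul, hIkey,
            Complex.real_smul, Complex.real_smul]
          simp only [map_add, map_mul, map_neg, Complex.conj_ofReal, Complex.conj_I, smul_eq_mul]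
          linear_combination ((starRingEnd ℂ) (D (((0:E), h) : E × E))) * (Complex.re_add_im a)
        cont := by
          show Continuous fun h : E => (starRingEnd ℂ) (D ((0:E), h))
          exact continuous_star.comp (D.continuous.comp (Continuous.prodMk_right (0:E))) } with hD2def
    have hrs : D2.restrictScalars ℝ
        = (Complex.conjCLE.toContinuousLinearMap).comp (D.comp (ContinuousLinearMap.inr ℝ E E)) := by
      ext h; rfl
    exact (hasFDerivAt_of_restrictScalars ℝ hconj hrs).differentiableAt

lemma pull_factor {k : ℕ} (M : ContinuousMultilinearMap ℝ (fun _ : Fin k => E × E) ℂ)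
    (op : E × E → E × E) (c : ℂ)
    (hop : ∀ (v : Fin k → E × E) (j : Fin k) (x : E × E),
      M (Function.update v j (op x)) = c * M (Function.update v j x))
    (S : Finset (Fin k)) :
    ∀ (m : Fin k → E × E),
      M (fun i => if i ∈ S then op (m i) else m i) = c ^ S.card * M m := by
  induction S using Finset.induction_on with
  | empty => intro m; simp
  | @insert j S hj ih =>
    intro m
    have hfun : (fun i => if i ∈ insert j S then op (m i) else m i)
        = Function.update (fun i => if i ∈ S then op (m i) else m i) j (op (m j)) := by
      funext i
      by_cases hi : i = j
      · subst hi; simp [hj]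
      · rw [Function.update_of_ne hi]
        simp [Finset.mem_insert, hi]
    have hupd : Function.update (fun i => if i ∈ S then op (m i) else m i) j (m j)
        = (fun i => if i ∈ S then op (m i) else m i) := by
      funext i
      by_cases hi : i = j
      · subst hi; simp [hj]
      · rw [Function.update_of_ne hi]
    rw [hfun, hop _ j (m j), hupd, ih, Finset.card_insert_of_notMem hj]
    ring

lemma piecewise_op {k : ℕ} (M : ContinuousMultilinearMap ℝ (fun _ : Fin k => E × E) ℂ)
    (op : E × E → E × E) (c : ℂ)
    (hop : ∀ (v : Fin k → E × E) (j : Fin k) (x : E × E),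
      M (Function.update v j (op x)) = c * M (Function.update v j x))
    (S : Finset (Fin k)) (da db : E × E) :
    M (S.piecewise (fun _ => op db) (fun _ => da))
      = c ^ S.card * M (S.piecewise (fun _ => db) (fun _ => da)) := by
  have h1 : S.piecewise (fun _ => op db) (fun _ => da)
      = fun i => if i ∈ S then op ((S.piecewise (fun _ : Fin k => db) (fun _ => da)) i)
          else (S.piecewise (fun _ : Fin k => db) (fun _ => da)) i := by
    funext i
    by_cases hi : i ∈ S
    · simp [Finset.piecewise_eq_of_mem _ _ _ hi, hi]
    · simp [Finset.piecewise_eq_of_notMem _ _ _ hi, hi]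
  rw [h1, pull_factor M op c hop S _]

lemma twisted_diag_zero {k : ℕ} (M : ContinuousMultilinearMap ℝ (fun _ : Fin k => E × E) ℂ)
    (hM : Twisted M) (h0 : ∀ x : E, M (fun _ => ((x, x) : E × E)) = 0) (v : E × E) :
    M (fun _ => v) = 0 := by
  classical
  set a : E := Amap v with ha
  set b : E := Bmap v with hb
  set da : E × E := ((a, a) : E × E) with hda
  set db : E × E := ((b, b) : E × E) with hdb
  have hv : v = da + Istar db := by
    rw [hda, hdb, ha, hb]
    show v = ((Amap v, Amap v) : E × E) + (Complex.I • Bmap v, -(Complex.I • Bmap v))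
    have h1 : v.1 = Amap v + Complex.I • Bmap v := by
      simp only [Amap_apply, Bmap_apply]
      match_scalars <;> ring_nf <;> rw [Complex.I_sq] <;> ring
    have h2 : v.2 = Amap v - Complex.I • Bmap v := by
      simp only [Amap_apply, Bmap_apply]
      match_scalars <;> ring_nf <;> rw [Complex.I_sq] <;> ring
    ext
    · simpa using h1
    · simpa [sub_eq_add_neg] using h2
  set mS : Finset (Fin k) → ℂ := fun S => M (S.piecewise (fun _ => db) (fun _ => da)) with hmS
  set P : Polynomial ℂ :=
    ∑ S : Finset (Fin k), Polynomial.C (mS S) * Polynomial.X ^ S.card with hP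
  have hsmul_op : ∀ (x : ℝ) (w : Fin k → E × E) (j : Fin k) (u : E × E),
      M (Function.update w j (x • u)) = (x : ℂ) * M (Function.update w j u) := by
    intro x w j u
    rw [M.map_update_smul w j x u, Complex.real_smul]
  have heval : ∀ z : ℂ, P.eval z = ∑ S : Finset (Fin k), mS S * z ^ S.card := by
    intro z
    rw [hP, Polynomial.eval_finset_sum]
    simp [Polynomial.eval_mul, Polynomial.eval_pow]
  have hreal : ∀ x : ℝ, P.eval (x : ℂ) = 0 := by
    intro x
    rw [heval]
    have hdiag : M (fun _ => da + x • db) = 0 := by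
      have : da + x • db = ((a + x • b, a + x • b) : E × E) := by
        rw [hda, hdb]; simp [Prod.smul_mk, Prod.mk_add_mk]
      rw [this]
      exact h0 (a + x • b)
    have hexp : M (fun _ => da + x • db)
        = ∑ S : Finset (Fin k), M (S.piecewise (fun _ => x • db) (fun _ => da)) := by
      have : (fun _ : Fin k => da + x • db)
          = (fun _ : Fin k => x • db) + (fun _ : Fin k => da) := by
        funext i; simp [add_comm]
      rw [this]
      exact M.toMultilinearMap.map_add_univ _ _
    have hterm : ∀ S : Finset (Fin k),
        M (S.piecewise (fun _ => x • db) (fun _ => da)) = (x : ℂ) ^ S.card * mS S := by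
      intro S
      exact piecewise_op M (fun u => x • u) (x : ℂ) (hsmul_op x) S da db
    rw [hdiag] at hexp
    rw [show (∑ S : Finset (Fin k), mS S * (x:ℂ) ^ S.card)
        = ∑ S : Finset (Fin k), M (S.piecewise (fun _ => x • db) (fun _ => da)) from
      Finset.sum_congr rfl (fun S _ => by rw [hterm S]; ring)]
    exact hexp.symm
  have hPzero : P = 0 := by
    apply Polynomial.eq_zero_of_infinite_isRoot
    apply Set.Infinite.mono (s := (Set.range (fun x : ℝ => (x : ℂ))))
    · rintro z ⟨x, rfl⟩
      exact hreal x
    · exact Set.infinite_range_of_injective Complex.ofReal_injective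
  have hI : M (fun _ => v) = P.eval Complex.I := by
    rw [heval]
    have hexp : M (fun _ => v)
        = ∑ S : Finset (Fin k), M (S.piecewise (fun _ => Istar db) (fun _ => da)) := by
      have : (fun _ : Fin k => v) = (fun _ : Fin k => Istar db) + (fun _ : Fin k => da) := by
        funext i; rw [hv]; simp [add_comm]
      rw [this]
      exact M.toMultilinearMap.map_add_univ _ _
    have hterm : ∀ S : Finset (Fin k),
        M (S.piecewise (fun _ => Istar db) (fun _ => da)) = Complex.I ^ S.card * mS S := by
      intro S
      exact piecewise_op M Istar Complex.I hM S da db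
    rw [hexp]
    exact Finset.sum_congr rfl (fun S _ => by rw [hterm S]; ring)
  rw [hI, hPzero]
  simp

/-- diagonal embedding as a continuous linear map -/
def dgCLM : E →L[ℝ] E × E :=
  (ContinuousLinearMap.id ℝ E).prod (ContinuousLinearMap.id ℝ E)

@[simp] lemma dgCLM_apply (x : E) : (dgCLM : E →L[ℝ] E × E) x = (x, x) := rfl

lemma dgCLM_norm_le : ‖(dgCLM : E →L[ℝ] E × E)‖ ≤ 1 := by
  apply ContinuousLinearMap.opNorm_le_bound _ zero_le_one
  intro x
  rw [one_mul]
  have : ‖((x, x) : E × E)‖ = max ‖x‖ ‖x‖ := rfl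
  simp [dgCLM_apply, this]

lemma eventually_zero_of_twisted {G : E × E → ℂ} {g : FormalMultilinearSeries ℝ (E × E) ℂ}
    {u : E} (hG : HasFPowerSeriesAt G g (u, u)) (ht : ∀ m, Twisted (g m))
    (h0 : ∀ᶠ x in nhds u, G (x, x) = 0) : G =ᶠ[nhds ((u, u) : E × E)] 0 := by
  obtain ⟨r, hball⟩ := hG
  set gd : FormalMultilinearSeries ℝ E ℂ :=
    fun k => (g k).compContinuousLinearMap (fun _ => dgCLM) with hgd
  have hgd_apply : ∀ (k : ℕ) (y : E), gd k (fun _ => y) = g k (fun _ => ((y, y) : E × E)) := by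
    intro k y
    rw [hgd]
    rw [ContinuousMultilinearMap.compContinuousLinearMap_apply]
    simp
  have hgd_norm : ∀ k, ‖gd k‖ ≤ ‖g k‖ := by
    intro k
    rw [hgd]
    refine ((g k).norm_compContinuousLinearMap_le _).trans ?_
    calc ‖g k‖ * ∏ _i : Fin k, ‖(dgCLM : E →L[ℝ] E × E)‖
        ≤ ‖g k‖ * ∏ _i : Fin k, 1 := by
          apply mul_le_mul_of_nonneg_left _ (norm_nonneg _)
          exact Finset.prod_le_prod (fun _ _ => norm_nonneg _) (fun _ _ => dgCLM_norm_le)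
      _ = ‖g k‖ := by simp
  have hrad : r ≤ gd.radius := by
    apply ENNReal.le_of_forall_nnreal_lt
    intro ρ hρ
    obtain ⟨C, _hC0, hC⟩ := g.norm_mul_pow_le_of_lt_radius (lt_of_lt_of_le hρ hball.r_le)
    apply gd.le_radius_of_bound C
    intro n
    calc ‖gd n‖ * (ρ : ℝ) ^ n ≤ ‖g n‖ * (ρ : ℝ) ^ n :=
        mul_le_mul_of_nonneg_right (hgd_norm n) (by positivity)
      _ ≤ C := hC n
  have hmem : ∀ {y : E}, y ∈ Metric.eball (0 : E) r → ((y, y) : E × E) ∈ Metric.eball (0 : E × E) r := by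
    intro y hy
    rw [Metric.mem_eball] at hy ⊢
    have h1 : edist ((y, y) : E × E) (((0 : E), (0 : E)) : E × E) = edist y 0 := by
      rw [Prod.edist_eq]
      simp
    rw [show ((0 : E × E)) = (((0 : E), (0 : E)) : E × E) from rfl, h1]
    exact hy
  have hdiag : HasFPowerSeriesOnBall (fun x => G (x, x)) gd u r := by
    refine ⟨hrad, hball.r_pos, ?_⟩
    intro y hy
    have := hball.hasSum (hmem hy)
    have heq : ((u, u) : E × E) + ((y, y) : E × E) = ((u + y, u + y) : E × E) := rfl
    rw [heq] at this
    simpa [hgd_apply] using this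
  have h0' : (fun x => G (x, x)) =ᶠ[nhds u] (0 : E → ℂ) := h0.mono (fun x hx => hx)
  have hzero : HasFPowerSeriesAt (0 : E → ℂ) gd u :=
    hdiag.hasFPowerSeriesAt.congr h0'
  have gk0 : ∀ (k : ℕ) (x : E), g k (fun _ => ((x, x) : E × E)) = 0 := by
    intro k x
    rw [← hgd_apply]
    exact hzero.apply_eq_zero k x
  have gall : ∀ (k : ℕ) (w : E × E), g k (fun _ => w) = 0 :=
    fun k w => twisted_diag_zero (g k) (ht k) (gk0 k) w
  have hzero' : ∀ v ∈ Metric.eball ((u, u) : E × E) r, G v = 0 := by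
    intro v hv
    have hy : v - ((u, u) : E × E) ∈ Metric.eball (0 : E × E) r := by
      rw [Metric.mem_eball] at hv ⊢
      rw [show (0 : E × E) = (u, u) - (u, u) by simp, edist_sub_right]
      exact hv
    have hs := hball.hasSum hy
    have hvv : ((u, u) : E × E) + (v - (u, u)) = v := by abel
    rw [hvv] at hs
    have hz : (fun n => g n (fun _ => v - ((u, u) : E × E))) = fun _ => (0 : ℂ) :=
      funext fun n => gall n _
    rw [hz] at hs
    exact (hasSum_zero.unique hs).symm
  exact Filter.eventuallyEq_of_mem (Metric.eball_mem_nhds _ hball.r_pos) hzero'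

/-- the twisted complexification of a formal multilinear series -/
def cxs (p : FormalMultilinearSeries ℝ E ℝ) : FormalMultilinearSeries ℝ (E × E) ℂ :=
  fun k => cxm (p k)

lemma local_exists {φ : E → ℝ} {p : E} (hφ : AnalyticAt ℝ φ p) :
    ∃ (q : FormalMultilinearSeries ℝ (E × E) ℂ) (Fp : E × E → ℂ) (r : ℝ≥0),
      0 < r ∧ (∀ k, Twisted (q k)) ∧ HasFPowerSeriesOnBall Fp q ((p, p) : E × E) r ∧
      (∀ x : E, dist x p < (r : ℝ) → Fp ((x, x) : E × E) = ((φ x : ℝ) : ℂ)) := by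
  obtain ⟨sp, rp, hball⟩ := hφ
  obtain ⟨t, ht0, htlt⟩ := ENNReal.lt_iff_exists_nnreal_btwn.mp hball.r_pos
  have ht0' : 0 < t := by exact_mod_cast ht0
  set r : ℝ≥0 := t / 2 with hrdef
  have hr0 : 0 < r := by positivity
  set q : FormalMultilinearSeries ℝ (E × E) ℂ := cxs sp with hq
  obtain ⟨C, hC0, hC⟩ := sp.norm_mul_pow_le_of_lt_radius (htlt.trans_le hball.r_le)
  have hrad : (r : ℝ≥0∞) ≤ q.radius := by
    apply q.le_radius_of_bound C
    intro m
    have h1 : ‖q m‖ ≤ 2 ^ m * ‖sp m‖ := by rw [hq]; exact cxm_norm_le (sp m)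
    have h2 : ((r : ℝ≥0) : ℝ) = (t : ℝ) / 2 := by
      rw [hrdef]; push_cast; ring
    calc ‖q m‖ * ((r : ℝ≥0) : ℝ) ^ m ≤ (2 ^ m * ‖sp m‖) * ((t : ℝ) / 2) ^ m := by
          rw [h2]
          apply mul_le_mul_of_nonneg_right h1 (by positivity)
      _ = ‖sp m‖ * (t : ℝ) ^ m := by
          rw [div_pow]
          field_simp
      _ ≤ C := hC m
  set Fp : E × E → ℂ := fun v => q.sum (v - ((p, p) : E × E)) with hFp
  have hFpball : HasFPowerSeriesOnBall Fp q ((p, p) : E × E) r := by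
    refine ⟨hrad, by exact_mod_cast hr0, ?_⟩
    intro y hy
    have hy' : y ∈ EMetric.ball (0 : E × E) q.radius := lt_of_lt_of_le hy hrad
    have := q.hasSum hy'
    have heq : Fp (((p, p) : E × E) + y) = q.sum y := by
      rw [hFp]; simp
    rw [heq]
    exact this
  refine ⟨q, Fp, r, hr0, ?_, hFpball, ?_⟩
  · intro k; rw [hq]; exact cxm_twisted (sp k)
  · intro x hx
    set y : E × E := ((x - p, x - p) : E × E) with hy
    have hynn : ‖y‖₊ = ‖x - p‖₊ := by
      rw [hy, Prod.nnnorm_def]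
      simp
    have hmem : y ∈ Metric.eball (0 : E × E) (r : ℝ≥0∞) := by
      rw [Metric.mem_eball, edist_zero_right, enorm_eq_nnnorm, hynn]
      rw [show ‖x - p‖₊ = nndist x p from by rw [nndist_eq_nnnorm]]
      exact_mod_cast hx
    have hs1 := hFpball.hasSum hmem
    have heq1 : ((p, p) : E × E) + y = ((x, x) : E × E) := by
      rw [hy]; ext <;> simp
    rw [heq1] at hs1
    have hterm : (fun m => q m (fun _ => y)) = fun m => (((sp m (fun _ => x - p)) : ℝ) : ℂ) := by
      funext m
      rw [hq, hy]
      exact cxm_diag (sp m) (fun _ => x - p)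
    rw [hterm] at hs1
    have hmem2 : x - p ∈ Metric.eball (0 : E) rp := by
      rw [Metric.mem_eball, edist_zero_right, enorm_eq_nnnorm]
      calc (‖x - p‖₊ : ℝ≥0∞) < (r : ℝ≥0∞) := by
            rw [show ‖x - p‖₊ = nndist x p from by rw [nndist_eq_nnnorm]]
            exact_mod_cast hx
        _ ≤ (t : ℝ≥0∞) := by
            rw [hrdef]
            exact_mod_cast ENNReal.coe_le_coe.mpr (half_le_self (zero_le (a := t)))
        _ < rp := htlt
  -- φ side
    have hs2 := hball.hasSum hmem2
    have heq2 : p + (x - p) = x := by abel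
    rw [heq2] at hs2
    have hs3 := hs2.mapL Complex.ofRealCLM
    exact hs1.unique (by simpa using hs3)

theorem main_general {E : Type*} [NormedAddCommGroup E] [NormedSpace ℂ E]
    (Ω : Set E) (hΩ : IsOpen Ω) (φ : E → ℝ) (hφ : AnalyticOnNhd ℝ φ Ω) :
    ∃ (W : Set (E × E)) (F : E × E → ℂ),
      IsOpen W ∧ (∀ p ∈ Ω, ((p, p) : E × E) ∈ W) ∧ W ⊆ Ω ×ˢ Ω ∧
      (∀ w, DifferentiableOn ℂ (fun z => F (z, w)) {z | (z, w) ∈ W}) ∧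
      (∀ z, DifferentiableOn ℂ (fun w => (starRingEnd ℂ) (F (z, w))) {w | (z, w) ∈ W}) ∧
      (∀ p ∈ Ω, F (p, p) = ((φ p : ℝ) : ℂ)) := by
  classical
  have H : ∀ p ∈ Ω, ∃ (q : FormalMultilinearSeries ℝ (E × E) ℂ) (Fp : E × E → ℂ) (r : ℝ≥0),
      0 < r ∧ (∀ k, Twisted (q k)) ∧ HasFPowerSeriesOnBall Fp q ((p, p) : E × E) r ∧
      (∀ x : E, dist x p < (r : ℝ) → Fp ((x, x) : E × E) = ((φ x : ℝ) : ℂ)) ∧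
      Metric.ball p (r : ℝ) ⊆ Ω := by
    intro p hp
    obtain ⟨q, Fp, r, hr0, htw, hb, hd⟩ := local_exists (hφ p hp)
    obtain ⟨ε, hε0, hεsub⟩ := Metric.isOpen_iff.mp hΩ p hp
    set r' : ℝ≥0 := min r (Real.toNNReal (ε / 2)) with hr'
    have hεpos : 0 < Real.toNNReal (ε / 2) := Real.toNNReal_pos.mpr (by linarith)
    have hr'0 : 0 < r' := lt_min hr0 hεpos
    have hr'le : r' ≤ r := min_le_left _ _
    have hr'coe : (r' : ℝ) ≤ ε / 2 := by
      have := min_le_right r (Real.toNNReal (ε / 2))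
      calc (r' : ℝ) ≤ (Real.toNNReal (ε / 2) : ℝ) := by exact_mod_cast this
        _ = ε / 2 := Real.coe_toNNReal _ (by linarith)
    refine ⟨q, Fp, r', hr'0, htw,
      hb.mono (by exact_mod_cast hr'0) (by exact_mod_cast hr'le), ?_, ?_⟩
    · intro x hx
      exact hd x (lt_of_lt_of_le hx (by exact_mod_cast hr'le))
    · intro x hx
      apply hεsub
      rw [Metric.mem_ball] at hx ⊢
      linarith
  choose! qf Ff rf h0 htw hball hdiag hsub using H
  set B : E → Set (E × E) := fun p => Metric.ball p ((rf p : ℝ)) ×ˢ Metric.ball p ((rf p : ℝ))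
    with hB
  set W : Set (E × E) := ⋃ p ∈ Ω, B p with hW
  have hBopen : ∀ p, IsOpen (B p) := fun p => Metric.isOpen_ball.prod Metric.isOpen_ball
  have hWopen : IsOpen W := isOpen_biUnion (fun p _ => hBopen p)
  have hBdiag : ∀ p ∈ Ω, ((p, p) : E × E) ∈ B p := by
    intro p hp
    have : (0 : ℝ) < rf p := by exact_mod_cast h0 p hp
    exact ⟨Metric.mem_ball_self this, Metric.mem_ball_self this⟩
  have hdiagW : ∀ p ∈ Ω, ((p, p) : E × E) ∈ W := fun p hp =>
    Set.mem_biUnion hp (hBdiag p hp)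
  have hWsub : W ⊆ Ω ×ˢ Ω := by
    intro v hv
    obtain ⟨p, hp, hvB⟩ := Set.mem_iUnion₂.mp hv
    exact ⟨hsub p hp hvB.1, hsub p hp hvB.2⟩
  -- power series of the local functions at all points of their product ball
  have hat : ∀ p ∈ Ω, ∀ v ∈ B p,
      HasFPowerSeriesAt (Ff p) ((qf p).changeOrigin (v - ((p, p) : E × E))) v := by
    intro p hp v hv
    have hnn : (‖v - ((p, p) : E × E)‖₊ : ℝ≥0∞) < rf p := by
      have h1 : ‖v - ((p, p) : E × E)‖₊ = max ‖v.1 - p‖₊ ‖v.2 - p‖₊ := by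
        rw [Prod.nnnorm_def]
        rfl
      have hv1 : ‖v.1 - p‖₊ < rf p := by
        have := hv.1
        rw [Metric.mem_ball, dist_eq_norm] at this
        exact_mod_cast this
      have hv2 : ‖v.2 - p‖₊ < rf p := by
        have := hv.2
        rw [Metric.mem_ball, dist_eq_norm] at this
        exact_mod_cast this
      rw [h1]
      exact_mod_cast max_lt hv1 hv2
    have h2 := ((hball p hp).changeOrigin hnn).hasFPowerSeriesAt
    have h3 : ((p, p) : E × E) + (v - ((p, p) : E × E)) = v := by abel
    rwa [h3] at h2
  have htwist_at : ∀ p ∈ Ω, ∀ (y : E × E) (k : ℕ), Twisted ((qf p).changeOrigin y k) :=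
    fun p hp y k => twisted_changeOrigin (htw p hp) y k
  -- consistency of the local polarizations
  have hcons : ∀ p ∈ Ω, ∀ p' ∈ Ω, ∀ v, v ∈ B p → v ∈ B p' → Ff p v = Ff p' v := by
    intro p hp p' hp' v hv hv'
    set S : Set E := Metric.ball p ((rf p : ℝ)) ∩ Metric.ball p' ((rf p' : ℝ)) with hS
    have hO : v ∈ S ×ˢ S := ⟨⟨hv.1, hv'.1⟩, ⟨hv.2, hv'.2⟩⟩
    have hzS : v.1 ∈ S := hO.1
    have hdiagpt : ((v.1, v.1) : E × E) ∈ S ×ˢ S := ⟨hzS, hzS⟩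
    have hBS : ∀ w ∈ S ×ˢ S, w ∈ B p := fun w hw => ⟨hw.1.1, hw.2.1⟩
    have hBS' : ∀ w ∈ S ×ˢ S, w ∈ B p' := fun w hw => ⟨hw.1.2, hw.2.2⟩
    have han : AnalyticOnNhd ℝ (Ff p) (S ×ˢ S) := fun w hw => (hat p hp w (hBS w hw)).analyticAt
    have han' : AnalyticOnNhd ℝ (Ff p') (S ×ˢ S) := fun w hw => (hat p' hp' w (hBS' w hw)).analyticAt
    have hpre : IsPreconnected (S ×ˢ S) := by
      have hcv : Convex ℝ S := (convex_ball p _).inter (convex_ball p' _)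
      exact (hcv.prod hcv).isPreconnected
    have hGat := (hat p hp ((v.1, v.1) : E × E) (hBS _ hdiagpt)).sub
      (hat p' hp' ((v.1, v.1) : E × E) (hBS' _ hdiagpt))
    have hSopen : IsOpen S := Metric.isOpen_ball.inter Metric.isOpen_ball
    have h0ev : ∀ᶠ x in nhds v.1, (fun w => Ff p w - Ff p' w) ((x, x) : E × E) = 0 := by
      filter_upwards [hSopen.mem_nhds hzS] with x hx
      have e1 : Ff p ((x, x) : E × E) = ((φ x : ℝ) : ℂ) := by
        apply hdiag p hp x
        have := hx.1
        rwa [Metric.mem_ball] at this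
      have e2 : Ff p' ((x, x) : E × E) = ((φ x : ℝ) : ℂ) := by
        apply hdiag p' hp' x
        have := hx.2
        rwa [Metric.mem_ball] at this
      simp [e1, e2]
    have hev := eventually_zero_of_twisted hGat
      (fun k => Twisted.sub (htwist_at p hp _ k) (htwist_at p' hp' _ k)) h0ev
    have heqon := (han.sub han').eqOn_zero_of_preconnected_of_eventuallyEq_zero hpre hdiagpt
      (by simpa using hev)
    have := heqon hO
    simpa [sub_eq_zero] using this
  -- the global function
  set Fg : E × E → ℂ := fun v => if h : ∃ p, p ∈ Ω ∧ v ∈ B p then Ff h.choose v else 0 with hFg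
  have hFgeq : ∀ p ∈ Ω, ∀ v ∈ B p, Fg v = Ff p v := by
    intro p hp v hv
    have hex : ∃ p', p' ∈ Ω ∧ v ∈ B p' := ⟨p, hp, hv⟩
    have : Fg v = Ff hex.choose v := by
      rw [hFg]
      exact dif_pos hex
    rw [this]
    exact hcons hex.choose hex.choose_spec.1 p hp v hex.choose_spec.2 hv
  refine ⟨W, Fg, hWopen, hdiagW, hWsub, ?_, ?_, ?_⟩
  · -- holomorphic in z
    intro w z hz
    simp only [Set.mem_setOf_eq] at hz
    obtain ⟨p, hp, hzw⟩ := Set.mem_iUnion₂.mp hz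
    have hZW := hat p hp ((z, w) : E × E) hzw
    have hd := (diff_of_twisted hZW (htwist_at p hp _ 1)).1
    have hev : (fun z' => Fg (z', w)) =ᶠ[nhds z] (fun z' => Ff p (z', w)) := by
      filter_upwards [Metric.isOpen_ball.mem_nhds hzw.1] with z' hz'
      exact hFgeq p hp ((z', w) : E × E) ⟨hz', hzw.2⟩
    exact (hd.congr_of_eventuallyEq hev).differentiableWithinAt
  · -- antiholomorphic in w
    intro z w hw
    simp only [Set.mem_setOf_eq] at hw
    obtain ⟨p, hp, hzw⟩ := Set.mem_iUnion₂.mp hw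
    have hZW := hat p hp ((z, w) : E × E) hzw
    have hd := (diff_of_twisted hZW (htwist_at p hp _ 1)).2
    have hev : (fun w' => (starRingEnd ℂ) (Fg (z, w')))
        =ᶠ[nhds w] (fun w' => (starRingEnd ℂ) (Ff p (z, w'))) := by
      filter_upwards [Metric.isOpen_ball.mem_nhds hzw.2] with w' hw'
      rw [hFgeq p hp ((z, w') : E × E) ⟨hzw.1, hw'⟩]
    exact (hd.congr_of_eventuallyEq hev).differentiableWithinAt
  · -- diagonal values
    intro p hp
    rw [hFgeq p hp ((p, p) : E × E) (hBdiag p hp)]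
    apply hdiag p hp
    simpa using (by exact_mod_cast h0 p hp : (0:ℝ) < rf p)

end Polar


/-- `F` is a polarization of `φ : Ω → ℝ` on a set `W ⊆ Ω × Ω` containing the diagonal:
`z ↦ F(z,w)` is holomorphic, `w ↦ conj (F(z,w))` is holomorphic, and `F(p,p) = φ(p)`
for `p ∈ Ω`. -/
def IsPolarization {n : ℕ} (Ω : Set (EuclideanSpace ℂ (Fin n)))
    (φ : EuclideanSpace ℂ (Fin n) → ℝ)
    (W : Set (EuclideanSpace ℂ (Fin n) × EuclideanSpace ℂ (Fin n)))
    (F : EuclideanSpace ℂ (Fin n) × EuclideanSpace ℂ (Fin n) → ℂ) : Prop :=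
  (∀ w, DifferentiableOn ℂ (fun z => F (z, w)) {z | (z, w) ∈ W}) ∧
  (∀ z, DifferentiableOn ℂ (fun w => conj (F (z, w))) {w | (z, w) ∈ W}) ∧
  (∀ p ∈ Ω, F (p, p) = (φ p : ℂ))

/-- a real-analytic φ : Ω → ℝ on an open Ω ⊆ ℂⁿ admits a polarization on
some open set W with Δ_Ω ⊆ W ⊆ Ω × Ω. -/
theorem polarization_exists (n : ℕ) (hn : 1 ≤ n)
    (Ω : Set (EuclideanSpace ℂ (Fin n))) (hΩ : IsOpen Ω)
    (φ : EuclideanSpace ℂ (Fin n) → ℝ) (hφ : AnalyticOnNhd ℝ φ Ω) :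
    ∃ (W : Set (EuclideanSpace ℂ (Fin n) × EuclideanSpace ℂ (Fin n)))
      (F : EuclideanSpace ℂ (Fin n) × EuclideanSpace ℂ (Fin n) → ℂ),
      IsOpen W ∧ (∀ p ∈ Ω, (p, p) ∈ W) ∧ W ⊆ Ω ×ˢ Ω ∧ IsPolarization Ω φ W F := by
  obtain ⟨W, F, hWopen, hdiag, hsub, h1, h2, h3⟩ := Polar.main_general Ω hΩ φ hφ
  exact ⟨W, F, hWopen, hdiag, hsub, h1, h2, h3⟩
end
end
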